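/- arXiv:1602.05696 — 3 statements merged into one kernel-verified Lean document; each statement's English description precedes it below -/
import Mathlib

section
/- For all real u > 0, the inequality 3(u-1)^2 ≤ (2u+4)·λ_B(u) holds, where λ_B(u) = u·log u − u + 1. -/
/-- The Boltzmann function. -/
noncomputable def lamB (u : ℝ) : ℝ := u * Real.log u - u + 1

open Real Set

private noncomputable def hfun (u : ℝ) : ℝ := (u + 1) * Real.log u - 2 * (u - 1)

private noncomputable def gfun (u : ℝ) : ℝ := (2 * u + 4) * lamB u - 3 * (u - 1) ^ 2

private lemma hfun_hasDeriv {u : ℝ} (hu : 0 < u) :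
    HasDerivAt hfun (Real.log u + 1 / u - 1) u := by
  have h1 : HasDerivAt (fun u : ℝ => (u + 1) * Real.log u)
      (1 * Real.log u + (u + 1) * u⁻¹) u :=
    ((hasDerivAt_id u).add_const 1).mul (Real.hasDerivAt_log hu.ne')
  have h2 : HasDerivAt (fun u : ℝ => 2 * (u - 1)) (2 * 1) u :=
    ((hasDerivAt_id u).sub_const 1).const_mul 2
  have h3 := h1.sub h2
  refine HasDerivAt.congr_deriv h3 ?_
  field_simp
  ring

private lemma hfun_mono : MonotoneOn hfun (Ioi (0 : ℝ)) := by
  have hderiv : ∀ u ∈ interior (Ioi (0 : ℝ)), 0 ≤ deriv hfun u := by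
    intro u hu
    rw [interior_Ioi] at hu
    rw [(hfun_hasDeriv hu).deriv]
    have := Real.log_le_sub_one_of_pos (one_div_pos.mpr hu)
    rw [Real.log_div one_ne_zero hu.ne', Real.log_one] at this
    linarith
  exact monotoneOn_of_deriv_nonneg (convex_Ioi 0)
    (fun u hu => (hfun_hasDeriv hu).differentiableAt.continuousAt.continuousWithinAt)
    (fun u hu => ((hfun_hasDeriv (by rw [interior_Ioi] at hu; exact hu)).differentiableAt).differentiableWithinAt)
    hderiv

private lemma hfun_one : hfun 1 = 0 := by simp [hfun]

private lemma gfun_hasDeriv {u : ℝ} (hu : 0 < u) :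
    HasDerivAt gfun (4 * hfun u) u := by
  have hlam : HasDerivAt lamB (Real.log u) u := by
    have h1 : HasDerivAt (fun u : ℝ => u * Real.log u)
        (1 * Real.log u + u * u⁻¹) u :=
      (hasDerivAt_id u).mul (Real.hasDerivAt_log hu.ne')
    have h2 := (h1.sub (hasDerivAt_id u)).add_const 1
    have : 1 * Real.log u + u * u⁻¹ - 1 = Real.log u := by
      field_simp
      ring
    rw [this] at h2
    exact h2
  have hc : HasDerivAt (fun u : ℝ => 2 * u + 4) 2 u := by
    simpa using ((hasDerivAt_id u).const_mul 2).add_const 4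
  have hprod := hc.mul hlam
  have hsq : HasDerivAt (fun u : ℝ => 3 * (u - 1) ^ 2)
      (3 * (2 * (u - 1) ^ 1 * 1)) u :=
    (((hasDerivAt_id u).sub_const 1).pow 2).const_mul 3
  have h3 := hprod.sub hsq
  refine HasDerivAt.congr_deriv h3 ?_
  simp only [lamB, hfun]
  ring

private lemma gfun_nonneg {u : ℝ} (hu : 0 < u) : 0 ≤ gfun u := by
  have hg1 : gfun 1 = 0 := by simp [gfun, lamB]
  rcases le_total u 1 with h | h
  · -- antitone on Ioc 0 1
    have hanti : AntitoneOn gfun (Ioc (0 : ℝ) 1) := by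
      apply antitoneOn_of_deriv_nonpos (convex_Ioc 0 1)
      · exact fun x hx => (gfun_hasDeriv hx.1).differentiableAt.continuousAt.continuousWithinAt
      · intro x hx
        rw [interior_Ioc] at hx
        exact ((gfun_hasDeriv hx.1).differentiableAt).differentiableWithinAt
      · intro x hx
        rw [interior_Ioc] at hx
        rw [(gfun_hasDeriv hx.1).deriv]
        have : hfun x ≤ hfun 1 :=
          hfun_mono hx.1 (by norm_num) hx.2.le
        rw [hfun_one] at this
        linarith
    have := hanti ⟨hu, h⟩ ⟨one_pos, le_refl 1⟩ h
    linarith [hg1 ▸ this]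
  · have hmono : MonotoneOn gfun (Ici (1 : ℝ)) := by
      apply monotoneOn_of_deriv_nonneg (convex_Ici 1)
      · exact fun x hx => (gfun_hasDeriv (lt_of_lt_of_le one_pos hx)).differentiableAt.continuousAt.continuousWithinAt
      · intro x hx
        rw [interior_Ici] at hx
        exact ((gfun_hasDeriv (lt_trans one_pos hx)).differentiableAt).differentiableWithinAt
      · intro x hx
        rw [interior_Ici] at hx
        rw [(gfun_hasDeriv (lt_trans one_pos hx)).deriv]
        have : hfun 1 ≤ hfun x :=
          hfun_mono (by norm_num) (mem_Ioi.mpr (lt_trans one_pos hx)) hx.le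
        rw [hfun_one] at this
        linarith
    have := hmono (self_mem_Ici) h h
    linarith [hg1 ▸ this]

/-- For all real `u > 0`, `3 (u-1)^2 ≤ (2u+4) λ_B(u)`. -/
theorem pinsker_elementary (u : ℝ) (hu : 0 < u) :
    3 * (u - 1) ^ 2 ≤ (2 * u + 4) * lamB u := by
  have := gfun_nonneg hu
  simp only [gfun] at this
  linarith
end

section
/- For all y > 0, one has log(y)·(y − 1) ≥ 4·(√y − 1)^2. -/
open Real

lemma key_log_ineq : ∀ s : ℝ, 1 ≤ s → 2 * (s - 1) ≤ (s + 1) * Real.log s := by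
  have hmono : MonotoneOn (fun s : ℝ => (s + 1) * Real.log s - 2 * (s - 1)) (Set.Ici 1) := by
    apply monotoneOn_of_deriv_nonneg (convex_Ici 1)
    · fun_prop (disch := intro x hx; exact (by linarith [Set.mem_Ici.mp hx] : (0:ℝ) < x).ne')
    · intro x hx
      have hx1 : (1:ℝ) < x := by simpa using hx
      have hx0 : (0:ℝ) < x := by linarith
      apply DifferentiableAt.differentiableWithinAt
      fun_prop (disch := exact hx0.ne')
    · intro x hx
      have hx1 : (1:ℝ) < x := by simpa using hx
      have hx0 : (0:ℝ) < x := by linarith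
      have hd : deriv (fun s : ℝ => (s + 1) * Real.log s - 2 * (s - 1)) x
          = Real.log x + (x + 1) / x - 2 := by
        have h1 : HasDerivAt (fun s : ℝ => (s + 1) * Real.log s - 2 * (s - 1))
            (1 * Real.log x + (x + 1) * x⁻¹ - 2 * 1) x := by
          exact (((hasDerivAt_id x).add_const 1).mul
            (Real.hasDerivAt_log hx0.ne')).sub
            (((hasDerivAt_id x).sub_const 1).const_mul 2)
        rw [h1.deriv]; field_simp
      rw [hd]
      have hlog : 1 - x⁻¹ ≤ Real.log x := Real.one_sub_inv_le_log_of_pos hx0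
      have : (x + 1) / x = 1 + 1/x := by field_simp
      rw [this]
      have : x⁻¹ = 1/x := by rw [inv_eq_one_div]
      nlinarith [hlog, this]
  intro s hs
  have := hmono (Set.mem_Ici.mpr le_rfl) (Set.mem_Ici.mpr hs) hs
  simp at this
  linarith

lemma main_ge_one (y : ℝ) (hy : 1 ≤ y) :
    Real.log y * (y - 1) ≥ 4 * (Real.sqrt y - 1) ^ 2 := by
  set s := Real.sqrt y with hs
  have hy0 : (0:ℝ) < y := by linarith
  have hs1 : 1 ≤ s := by
    rw [hs, show (1:ℝ) = Real.sqrt 1 by simp]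
    exact Real.sqrt_le_sqrt hy
  have hsq : s ^ 2 = y := Real.sq_sqrt hy0.le
  have hlog : Real.log y = 2 * Real.log s := by
    rw [← hsq, Real.log_pow]; push_cast; ring
  have hkey := key_log_ineq s hs1
  have hlogs : 0 ≤ Real.log s := Real.log_nonneg hs1
  rw [hlog, ← hsq]
  nlinarith [hkey, hs1, hlogs, sq_nonneg (s - 1)]

/-- For all `y > 0`, `log y · (y - 1) ≥ 4 (√y - 1)^2`. -/
theorem log_mul_sub_one_ge (y : ℝ) (hy : 0 < y) :
    Real.log y * (y - 1) ≥ 4 * (Real.sqrt y - 1) ^ 2 := by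
  rcases le_or_gt 1 y with h | h
  · exact main_ge_one y h
  · have hinv : 1 ≤ y⁻¹ := (one_le_inv_iff₀).mpr ⟨hy, h.le⟩
    have H := main_ge_one y⁻¹ hinv
    have hlog : Real.log y⁻¹ = -Real.log y := Real.log_inv y
    have hsqrt : Real.sqrt y⁻¹ = (Real.sqrt y)⁻¹ := Real.sqrt_inv y
    rw [hlog, hsqrt] at H
    have hs0 : 0 < Real.sqrt y := Real.sqrt_pos.mpr hy
    have hsq : Real.sqrt y ^ 2 = y := Real.sq_sqrt hy.le
    have h1 : ((Real.sqrt y)⁻¹ - 1)^2 = (Real.sqrt y - 1)^2 / y := by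
      rw [← hsq]; field_simp; rw [Real.sqrt_sq hs0.le]; ring
    have h2 : (y⁻¹ - 1) = -(y - 1)/y := by field_simp; ring
    rw [h1, h2] at H
    have : -Real.log y * (-(y-1)/y) = Real.log y * (y-1) / y := by ring
    rw [this, ← mul_div_assoc] at H
    have := (div_le_div_iff_of_pos_right hy).mp (ge_iff_le.mp H)
    linarith
end

section
/- Let n*, p*, n̄, p̄ > 0 satisfy the conservation relation n̄ − n* = p̄ − p*. Then n*·(√(n̄/n*) − 1)² + p*·(√(p̄/p*) − 1)² ≤ C₂ · (√(n̄p̄/(n*p*)) − 1)², where C₂ = p* + (p*)²/n* + 2n*/max{p̄/p*, n̄/n*}. -/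
lemma key1_aux (a b : ℝ) (ha : 0 < a) (hb : 0 < b) (hsame : 0 ≤ (a - 1) * (b - 1)) :
    (b - 1) ^ 2 ≤ (a * b - 1) ^ 2 := by
  nlinarith [mul_nonneg hb.le hsame, mul_nonneg (mul_nonneg hb.le ha.le) hsame,
    mul_nonneg hb.le (sq_nonneg (a - 1))]

lemma key2_aux (a b : ℝ) (ha : 0 < a) (hb : 0 < b) (hsame : 0 ≤ (a - 1) * (b - 1)) :
    b ^ 2 * (a - 1) ^ 2 ≤ (a * b - 1) ^ 2 := by
  nlinarith [mul_nonneg hb.le hsame, sq_nonneg (b - 1)]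

lemma averages_aux (ns ps a b : ℝ) (hns : 0 < ns) (hps : 0 < ps) (ha : 0 < a) (hb : 0 < b)
    (hcons : ns * (a ^ 2 - 1) = ps * (b ^ 2 - 1)) :
    ns * (a - 1) ^ 2 + ps * (b - 1) ^ 2
      ≤ (ps + ps ^ 2 / ns + 2 * ns / max (b ^ 2) (a ^ 2)) * (a * b - 1) ^ 2 := by
  have hmul : ns * ((a ^ 2 - 1) * (b ^ 2 - 1)) = ps * (b ^ 2 - 1) ^ 2 := by
    linear_combination (b ^ 2 - 1) * hcons
  have h0 : 0 ≤ (a ^ 2 - 1) * (b ^ 2 - 1) := by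
    nlinarith [hmul, mul_nonneg hps.le (sq_nonneg (b ^ 2 - 1))]
  have hsame : 0 ≤ (a - 1) * (b - 1) := by
    nlinarith [h0, mul_pos (by linarith : (0:ℝ) < a + 1) (by linarith : (0:ℝ) < b + 1)]
  have key1 := key1_aux a b ha hb hsame
  have hps1 : ps * (b - 1) ^ 2 ≤ ps * (a * b - 1) ^ 2 :=
    mul_le_mul_of_nonneg_left key1 hps.le
  rcases le_total b a with hba | hba
  · -- max = a^2
    have hm : max (b ^ 2) (a ^ 2) = a ^ 2 := max_eq_right (by nlinarith)
    rw [hm]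
    have e : ns * (a - 1) * (a + 1) = ps * ((b - 1) * (b + 1)) := by
      linear_combination hcons
    have hbp : (b - 1) ^ 2 * (b + 1) ^ 2 ≤ (a * b - 1) ^ 2 * (a + 1) ^ 2 :=
      mul_le_mul key1 (by nlinarith) (by positivity) (by positivity)
    have h4 : (ns ^ 2 * (a - 1) ^ 2) * (a + 1) ^ 2 ≤ (ps ^ 2 * (a * b - 1) ^ 2) * (a + 1) ^ 2 := by
      have e2 : (ns ^ 2 * (a - 1) ^ 2) * (a + 1) ^ 2 = ps ^ 2 * ((b - 1) ^ 2 * (b + 1) ^ 2) := by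
        linear_combination (ns * (a - 1) * (a + 1) + ps * ((b - 1) * (b + 1))) * e
      rw [e2]
      calc ps ^ 2 * ((b - 1) ^ 2 * (b + 1) ^ 2) ≤ ps ^ 2 * ((a * b - 1) ^ 2 * (a + 1) ^ 2) :=
            mul_le_mul_of_nonneg_left hbp (by positivity)
        _ = ps ^ 2 * (a * b - 1) ^ 2 * (a + 1) ^ 2 := by ring
    have key2 : ns ^ 2 * (a - 1) ^ 2 ≤ ps ^ 2 * (a * b - 1) ^ 2 :=
      le_of_mul_le_mul_right h4 (by positivity)
    have hns1 : ns * (a - 1) ^ 2 ≤ ps ^ 2 / ns * (a * b - 1) ^ 2 := by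
      rw [div_mul_eq_mul_div, le_div_iff₀ hns]
      nlinarith [key2]
    have h2ns : 0 ≤ 2 * ns / a ^ 2 * (a * b - 1) ^ 2 := by positivity
    have expand : (ps + ps ^ 2 / ns + 2 * ns / a ^ 2) * (a * b - 1) ^ 2
        = ps * (a * b - 1) ^ 2 + ps ^ 2 / ns * (a * b - 1) ^ 2
          + 2 * ns / a ^ 2 * (a * b - 1) ^ 2 := by ring
    linarith
  · -- max = b^2
    have hm : max (b ^ 2) (a ^ 2) = b ^ 2 := max_eq_left (by nlinarith)
    rw [hm]
    have key2' := key2_aux a b ha hb hsame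
    have hns1 : ns * (a - 1) ^ 2 ≤ 2 * ns / b ^ 2 * (a * b - 1) ^ 2 := by
      rw [div_mul_eq_mul_div, le_div_iff₀ (by positivity : (0:ℝ) < b ^ 2)]
      nlinarith [key2', mul_le_mul_of_nonneg_left key2' hns.le]
    have h2 : 0 ≤ ps ^ 2 / ns * (a * b - 1) ^ 2 := by positivity
    have expand : (ps + ps ^ 2 / ns + 2 * ns / b ^ 2) * (a * b - 1) ^ 2
        = ps * (a * b - 1) ^ 2 + ps ^ 2 / ns * (a * b - 1) ^ 2
          + 2 * ns / b ^ 2 * (a * b - 1) ^ 2 := by ring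
    linarith

/-- If `n̄ − n* = p̄ − p*` (conservation of `n − p`), then
`n*(√(n̄/n*) − 1)² + p*(√(p̄/p*) − 1)² ≤ C₂ (√(n̄p̄/(n*p*)) − 1)²` with
`C₂ = p* + (p*)²/n* + 2n*/max{p̄/p*, n̄/n*}`. -/
theorem averages_estimate (ns ps nb pb : ℝ)
    (hns : 0 < ns) (hps : 0 < ps) (hnb : 0 < nb) (hpb : 0 < pb)
    (hcons : nb - ns = pb - ps) :
    ns * (Real.sqrt (nb / ns) - 1) ^ 2 + ps * (Real.sqrt (pb / ps) - 1) ^ 2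
      ≤ (ps + ps ^ 2 / ns + 2 * ns / max (pb / ps) (nb / ns))
          * (Real.sqrt (nb * pb / (ns * ps)) - 1) ^ 2 := by
  set a := Real.sqrt (nb / ns) with hadef
  set b := Real.sqrt (pb / ps) with hbdef
  have ha : 0 < a := Real.sqrt_pos.mpr (by positivity)
  have hb : 0 < b := Real.sqrt_pos.mpr (by positivity)
  have ha2 : a ^ 2 = nb / ns := Real.sq_sqrt (by positivity)
  have hb2 : b ^ 2 = pb / ps := Real.sq_sqrt (by positivity)
  have hab : Real.sqrt (nb * pb / (ns * ps)) = a * b := by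
    rw [hadef, hbdef, ← Real.sqrt_mul (by positivity)]
    congr 1
    field_simp
  have hcons' : ns * (a ^ 2 - 1) = ps * (b ^ 2 - 1) := by
    rw [ha2, hb2]
    field_simp
    linarith
  rw [hab, ← ha2, ← hb2]
  exact averages_aux ns ps a b hns hps ha hb hcons'
end
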